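/- If neuron i of a code C ⊆ F₂^m is redundant to α (meaning i ∉ α, Tk_i(C) = Tk_α(C), and not every word of C has 0 in position i), then the deletion map del_i : C → del_i(C) is injective. -/
import Mathlib


/-- The trunk of a code `C`, as a subset of `C`, determined by `α`. -/
def trunkIn {n : ℕ} (C : Set (Fin n → ZMod 2)) (α : Set (Fin n)) : Set ↥C :=
  {w : ↥C | ∀ i ∈ α, w.1 i = 1}

/-- if neuron `i` of `C` is redundant to `α` (i.e. `i ∉ α`,
`Tk_i(C) = Tk_α(C)`, and `i` is not constant zero on `C`), then the deletion
map `del_i` is injective on `C`. -/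
theorem stmt_19 {m : ℕ} (C : Set (Fin (m + 1) → ZMod 2)) (i : Fin (m + 1))
    (α : Set (Fin (m + 1))) (hiα : i ∉ α)
    (htrunk : trunkIn C {i} = trunkIn C α)
    (hnz : ¬ ∀ w ∈ C, w i = 0) :
    Function.Injective (fun w : ↥C => w.1 ∘ i.succAbove) := by
  intro w v h
  have hag : ∀ j, j ≠ i → w.1 j = v.1 j := by
    intro j hj
    obtain ⟨k, hk⟩ := Fin.exists_succAbove_eq hj
    have := congrFun h k
    simpa [hk] using this
  have key : ∀ a b : ↥C, (∀ j, j ≠ i → a.1 j = b.1 j) → a.1 i = 1 → b.1 i = 1 := by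
    intro a b hab ha
    have hai : a ∈ trunkIn C {i} := by
      intro j hj
      simp only [Set.mem_singleton_iff] at hj
      subst hj; exact ha
    rw [htrunk] at hai
    have hbα : b ∈ trunkIn C α := by
      intro j hj
      have hji : j ≠ i := fun e => hiα (e ▸ hj)
      rw [← hab j hji]
      exact hai j hj
    rw [← htrunk] at hbα
    exact hbα i rfl
  have hii : w.1 i = v.1 i := by
    have h2 : ∀ x : ZMod 2, x = 0 ∨ x = 1 := by decide
    rcases h2 (w.1 i) with hw | hw <;> rcases h2 (v.1 i) with hv | hv <;>
      rw [hw, hv]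
    · exact absurd (key v w (fun j hj => (hag j hj).symm) hv) (by rw [hw]; decide)
    · exact absurd (key w v hag hw) (by rw [hv]; decide)
  apply Subtype.ext
  funext j
  by_cases hj : j = i
  · subst hj; exact hii
  · exact hag j hj
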